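/- arXiv:1105.2847 — 3 statements merged into one kernel-verified Lean document; each statement's English description precedes it below -/
import Mathlib

section
/- For every ε > 0 there exists a constant C_ε > 0 such that for all real C ≥ 1, P{ |R(V)| ≤ C_ε·(C·V)^{1/2}·(log V)^{3/2+ε} for all V ≥ 10 } ≥ 1 − C^{−1} (the event in question is measurable). -/
open MeasureTheory ProbabilityTheory Filter Topology Set
open scoped Classical

noncomputable section

/-! ### Poisson process side -/

/-- `R(V) = N(V) - V` where `N(V) = 2·#{j : t j ≤ V}`. -/
def Rpt (t : ℕ → ℝ) (V : ℝ) : ℝ := 2 * (Nat.card {j : ℕ // t j ≤ V}) - V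

/-- `∫_A^B V^(-2c) dR(V) = 2 ∑_{A < t j ≤ B} (t j)^(-2c) - ∫_A^B V^(-2c) dV`. -/
def RInt (t : ℕ → ℝ) (c A B : ℝ) : ℝ :=
  2 * (∑' j : ℕ, if A < t j ∧ t j ≤ B then t j ^ (-(2*c)) else 0)
    - ∫ V in Set.Ioc A B, V ^ (-(2*c))

/-- `H(c)` exists with value `l`, i.e. `∫_0^∞ V^(-2c) dR(V)` converges to `l`. -/
def HasH (t : ℕ → ℝ) (c l : ℝ) : Prop :=
  Tendsto (fun B => RInt t c 0 B) atTop (𝓝 l)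

/-- The random variable `H(c)`, defined as `0` when the limit does not exist. -/
def Hval (t : ℕ → ℝ) (c : ℝ) : ℝ := if h : ∃ l, HasH t c l then h.choose else 0

/-- The random variable `Z₀`, defined as `0` when the limit does not exist. -/
def Z0val (t : ℕ → ℝ) : ℝ :=
  if h : ∃ l, Tendsto
      (fun B => 2 * (∑' j : ℕ, if 1 < t j ∧ t j ≤ B then (t j)⁻¹ else 0) - Real.log B)
      atTop (𝓝 l)
  then 2 * (∑' j : ℕ, if t j ≤ 1 then (t j)⁻¹ else 0) + h.choose else 0

/-! ### Lattice side -/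

abbrev SLn (n : ℕ) := Matrix.SpecialLinearGroup (Fin n) ℝ

instance matMS (n : ℕ) : MeasurableSpace (Matrix (Fin n) (Fin n) ℝ) :=
  (inferInstance : MeasurableSpace (Fin n → Fin n → ℝ))

instance slnMS (n : ℕ) : MeasurableSpace (SLn n) := Subtype.instMeasurableSpace

/-- The subgroup `SL(n,ℤ)` inside `SL(n,ℝ)`. -/
def SLZ (n : ℕ) : Subgroup (SLn n) :=
  (Matrix.SpecialLinearGroup.map (n := Fin n) (Int.castRingHom ℝ)).range

/-- The space `X_n = SL(n,ℤ) \ SL(n,ℝ)` of right cosets, i.e. of lattices `ℤⁿg`. -/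
def XSp (n : ℕ) : Type := Quotient (QuotientGroup.rightRel (SLZ n))

instance (n : ℕ) : MeasurableSpace (XSp n) := Quotient.instMeasurableSpace

/-- Right translation by `g` on `X_n`. -/
def rmul (n : ℕ) (g : SLn n) : XSp n → XSp n :=
  Quotient.map' (fun h => h * g) (fun a b hab => by
    rw [QuotientGroup.rightRel_apply] at hab ⊢
    have : b * g * (a * g)⁻¹ = b * a⁻¹ := by group
    rw [this]; exact hab)

/-- squared Euclidean norm on `ℝⁿ`. -/
def nsq {n : ℕ} (x : Fin n → ℝ) : ℝ := ∑ i, x i ^ 2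

/-- The point `m·A` of the lattice `ℤⁿA` (rows of `A` generate the lattice). -/
def latVec {n : ℕ} (A : Matrix (Fin n) (Fin n) ℝ) (m : Fin n → ℤ) : Fin n → ℝ :=
  Matrix.vecMul (fun i => (m i : ℝ)) A

/-- matrix whose rows generate the dual lattice `(ℤⁿg)* = ℤⁿ(gᵀ)⁻¹` of `ℤⁿg`. -/
def dualMat {n : ℕ} (g : SLn n) : Matrix (Fin n) (Fin n) ℝ :=
  Matrix.transpose ((g⁻¹ : SLn n) : Matrix (Fin n) (Fin n) ℝ)

/-- `G(s,x) = ∫_1^∞ t^(s-1) e^(-xt) dt`. -/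
def Gfun (s x : ℝ) : ℝ := ∫ t in Set.Ioi (1:ℝ), t ^ (s - 1) * Real.exp (-(x * t))

/-- The volume `V_n = π^(n/2)/Γ(n/2+1)` of the unit ball in `ℝⁿ`. -/
def ballVol (n : ℕ) : ℝ := Real.pi ^ ((n:ℝ)/2) / Real.Gamma ((n:ℝ)/2 + 1)

/-- `V_n·|v|ⁿ`, the volume of the ball of radius `|v|` in `ℝⁿ`. -/
def volOf (n : ℕ) (v : Fin n → ℝ) : ℝ := ballVol n * nsq v ^ ((n:ℝ)/2)

/-- The Epstein zeta function `E_n(L,s)` of the lattice `L = ℤⁿ g`, for real `0 < s < n/2`,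
given by its absolutely convergent incomplete-gamma expansion. -/
def epstein (n : ℕ) (g : SLn n) (s : ℝ) : ℝ :=
  Real.pi ^ s / Real.Gamma s *
    (-(1 / ((n:ℝ)/2 - s))
      + (∑' m : {m : Fin n → ℤ // m ≠ 0},
          Gfun s (Real.pi * nsq (latVec (g : Matrix (Fin n) (Fin n) ℝ) m.val)))
      - 1/s
      + ∑' m : {m : Fin n → ℤ // m ≠ 0},
          Gfun ((n:ℝ)/2 - s) (Real.pi * nsq (latVec (dualMat g) m.val)))

/-- `N_n(V)`: the number of nonzero points of `ℤⁿ g` in the closed ball of volume `V`. -/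
def NnF (n : ℕ) (g : SLn n) (V : ℝ) : ℕ :=
  Nat.card {m : Fin n → ℤ // m ≠ 0 ∧ volOf n (latVec (g : Matrix (Fin n) (Fin n) ℝ) m) ≤ V}

/-- `R_n(V) = N_n(V) - V`. -/
def RnF (n : ℕ) (g : SLn n) (V : ℝ) : ℝ := NnF n g V - V

end


set_option linter.unusedSectionVars false

noncomputable section AuxLemmas
open scoped NNReal ENNReal


lemma exp_integral_expMeasure {t : ℝ} (ht : t < 1/2) :
    Integrable (fun x => Real.exp (t * x)) (expMeasure (1/2)) ∧
    ∫ x, Real.exp (t * x) ∂(expMeasure (1/2)) = (1 - 2*t)⁻¹ := by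
  set b : ℝ := 1/2 - t with hbdef
  have hb : 0 < b := by simp [hbdef]; linarith
  have hpdf_meas : Measurable fun x => Real.toNNReal (gammaPDFReal 1 (1/2) x) :=
    (measurable_gammaPDFReal 1 (1/2)).real_toNNReal
  have hμ : expMeasure (1/2)
      = volume.withDensity (fun x => ((Real.toNNReal (gammaPDFReal 1 (1/2) x) : ℝ≥0) : ℝ≥0∞)) := by
    rfl
  have key : ∀ x : ℝ, (Real.toNNReal (gammaPDFReal 1 (1/2) x) : ℝ≥0) • Real.exp (t*x)
      = Set.indicator (Set.Ici (0:ℝ)) (fun x => (1/2) * Real.exp (-(b * x))) x := by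
    intro x
    rw [NNReal.smul_def, smul_eq_mul, Real.coe_toNNReal _ (gammaPDFReal_nonneg one_pos (by norm_num) x)]
    by_cases hx : (0:ℝ) ≤ x
    · rw [Set.indicator_of_mem (Set.mem_Ici.mpr hx)]
      simp only [gammaPDFReal, if_pos hx, Real.rpow_one, Real.Gamma_one, sub_self,
        Real.rpow_zero, mul_one, div_one]
      rw [mul_assoc, ← Real.exp_add]
      congr 1
      rw [hbdef]; congr 1; ring
    · rw [Set.indicator_of_notMem (by simpa using hx)]
      simp [gammaPDFReal, if_neg hx]
  have hint2 : Integrable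
      (Set.indicator (Set.Ici (0:ℝ)) (fun x => (1/2) * Real.exp (-(b * x)))) volume := by
    rw [integrable_indicator_iff measurableSet_Ici]
    rw [integrableOn_Ici_iff_integrableOn_Ioi]
    have h := (exp_neg_integrableOn_Ioi 0 hb).const_mul (1/2 : ℝ)
    simpa [neg_mul, IntegrableOn] using h
  constructor
  · rw [hμ, integrable_withDensity_iff_integrable_smul hpdf_meas]
    exact (funext key ▸ hint2 : _)
  · rw [hμ, integral_withDensity_eq_integral_smul hpdf_meas]
    calc ∫ x, (Real.toNNReal (gammaPDFReal 1 (1/2) x) : ℝ≥0) • Real.exp (t*x)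
        = ∫ x, Set.indicator (Set.Ici (0:ℝ)) (fun x => (1/2) * Real.exp (-(b * x))) x := by
          simp only [key]
      _ = ∫ x in Set.Ici (0:ℝ), (1/2) * Real.exp (-(b * x)) := integral_indicator measurableSet_Ici
      _ = ∫ x in Set.Ioi (0:ℝ), (1/2) * Real.exp (-(b * x)) := integral_Ici_eq_integral_Ioi
      _ = (1/2) * ∫ x in Set.Ioi (0:ℝ), Real.exp (-(b * x)) := by
          rw [integral_const_mul]
      _ = (1/2) * b⁻¹ := by
          have h := integral_comp_mul_left_Ioi (fun y => Real.exp (-y)) 0 hb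
          simp only [mul_zero, integral_exp_neg_Ioi_zero, smul_eq_mul, mul_one] at h
          rw [h]
      _ = (1 - 2*t)⁻¹ := by
          rw [hbdef]
          rw [show (1:ℝ) - 2*t = 2*(1/2 - t) by ring]
          rw [mul_inv]
          ring



def ellp (C : ℝ) (k : ℕ) : ℝ := Real.log C + 2*Real.log ((k:ℝ)+2) + 1

def phip (C : ℝ) (k : ℕ) : ℝ := 4*Real.sqrt (((k:ℝ)+1) * ellp C k) + 4 * ellp C k

lemma ellp_nonneg {C : ℝ} (hC : 1 ≤ C) (k : ℕ) : 0 ≤ ellp C k := by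
  have h1 : 0 ≤ Real.log C := Real.log_nonneg hC
  have h2 : 0 ≤ Real.log ((k:ℝ)+2) := Real.log_nonneg (by push_cast; linarith [Nat.cast_nonneg (α := ℝ) k])
  unfold ellp; linarith

lemma phip_nonneg {C : ℝ} (hC : 1 ≤ C) (k : ℕ) : 0 ≤ phip C k := by
  have := ellp_nonneg hC k
  unfold phip
  positivity

lemma sum_inv_sq (n : ℕ) : ∑ k ∈ Finset.range n, (((k:ℝ)+2)^2)⁻¹ ≤ 1 := by
  have key : ∀ n : ℕ, ∑ k ∈ Finset.range n, (((k:ℝ)+2)^2)⁻¹ ≤ 1 - ((n:ℝ)+1)⁻¹ := by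
    intro n
    induction n with
    | zero => simp
    | succ n ih =>
      rw [Finset.sum_range_succ]
      have h1 : (0:ℝ) < (n:ℝ)+1 := by positivity
      have h2 : (0:ℝ) < (n:ℝ)+2 := by positivity
      have h3 : (((n:ℝ)+2)^2)⁻¹ ≤ ((n:ℝ)+1)⁻¹ - ((n:ℝ)+2)⁻¹ := by
        rw [inv_sub_inv h1.ne' h2.ne']
        rw [show (n:ℝ)+2-((n:ℝ)+1) = 1 by ring]
        rw [show (((n:ℝ)+2)^2)⁻¹ = 1/(((n:ℝ)+2)*((n:ℝ)+2)) by rw [sq]; simp [one_div]]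
        rw [one_div, one_div]
        apply inv_anti₀ (by positivity)
        nlinarith
      have h4 : ((n:ℝ)+1+1)⁻¹ = ((n:ℝ)+2)⁻¹ := by
        congr 1; ring
      push_cast
      rw [h4]
      linarith [ih]
  have hpos : (0:ℝ) < ((n:ℝ)+1)⁻¹ := by positivity
  linarith [key n]


lemma Rpt_def (t : ℕ → ℝ) (V : ℝ) :
    Rpt t V = 2 * (Nat.card {j : ℕ // t j ≤ V}) - V := rfl

lemma ellp_def (C : ℝ) (k : ℕ) : ellp C k = Real.log C + 2*Real.log ((k:ℝ)+2) + 1 := rfl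

lemma phip_def (C : ℝ) (k : ℕ) :
    phip C k = 4*Real.sqrt (((k:ℝ)+1) * ellp C k) + 4 * ellp C k := rfl

lemma log_aux (x : ℝ) (hx : 0 ≤ x) : Real.log (x+2) ≤ 4 + (x+2)/128 := by
  have h1 : Real.log (x+2) = Real.log 128 + Real.log ((x+2)/128) := by
    rw [← Real.log_mul (by norm_num) (by positivity)]
    congr 1; ring
  have h2 : Real.log ((x+2)/128) ≤ (x+2)/128 - 1 := Real.log_le_sub_one_of_pos (by positivity)
  have h3 : Real.log 128 ≤ 5 := by
    rw [Real.log_le_iff_le_exp (by norm_num)]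
    have h := Real.exp_one_gt_d9
    calc (128:ℝ) ≤ 2.7182818283^5 := by norm_num
      _ ≤ Real.exp 1 ^ 5 := pow_le_pow_left₀ (by norm_num) h.le 5
      _ = Real.exp 5 := by rw [← Real.exp_nat_mul]; norm_num
  linarith

lemma log_le_two_sqrt {C : ℝ} (hC : 1 ≤ C) : Real.log C ≤ 2 * Real.sqrt C := by
  have h1 : (0:ℝ) < Real.sqrt C := Real.sqrt_pos.mpr (by linarith)
  have h2 : Real.log C = 2 * Real.log (Real.sqrt C) := by
    nth_rewrite 1 [← Real.sq_sqrt (show (0:ℝ) ≤ C by linarith)]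
    rw [Real.log_pow]; push_cast; ring
  rw [h2]
  have := Real.log_le_sub_one_of_pos h1
  linarith

lemma two_le_log {V : ℝ} (hV : 10 ≤ V) : 2 ≤ Real.log V := by
  rw [Real.le_log_iff_exp_le (by linarith)]
  calc Real.exp 2 = Real.exp 1 ^ 2 := by rw [← Real.exp_nat_mul]; norm_num
    _ ≤ 2.7182818286^2 := pow_le_pow_left₀ (Real.exp_pos 1).le Real.exp_one_lt_d9.le 2
    _ ≤ V := by nlinarith

lemma sqrt_add_le (a b : ℝ) (ha : 0 ≤ a) (hb : 0 ≤ b) :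
    Real.sqrt (a + b) ≤ Real.sqrt a + Real.sqrt b := by
  rw [show a + b = (Real.sqrt a)^2 + (Real.sqrt b)^2 by rw [Real.sq_sqrt ha, Real.sq_sqrt hb]]
  calc Real.sqrt (Real.sqrt a^2 + Real.sqrt b^2) ≤ Real.sqrt ((Real.sqrt a + Real.sqrt b)^2) := by
        apply Real.sqrt_le_sqrt; nlinarith [Real.sqrt_nonneg a, Real.sqrt_nonneg b]
    _ = _ := Real.sqrt_sq (by positivity)

lemma sqrt_le_self' {C : ℝ} (hC : 1 ≤ C) : Real.sqrt C ≤ C := by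
  have h1 : (1:ℝ) ≤ Real.sqrt C := by
    rw [show (1:ℝ) = Real.sqrt 1 by simp]; exact Real.sqrt_le_sqrt hC
  nlinarith [Real.sq_sqrt (show (0:ℝ) ≤ C by linarith), Real.sqrt_nonneg C]

lemma phip_mono {C : ℝ} (hC : 1 ≤ C) : Monotone (phip C) := by
  intro a b hab
  have hcast : ((a:ℝ)) ≤ (b:ℝ) := Nat.cast_le.mpr hab
  have hm : ellp C a ≤ ellp C b := by
    rw [ellp_def, ellp_def]
    have : Real.log ((a:ℝ)+2) ≤ Real.log ((b:ℝ)+2) :=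
      Real.log_le_log (by positivity) (by linarith)
    linarith
  rw [phip_def, phip_def]
  have h1 : Real.sqrt (((a:ℝ)+1) * ellp C a) ≤ Real.sqrt (((b:ℝ)+1) * ellp C b) := by
    apply Real.sqrt_le_sqrt
    apply mul_le_mul (by linarith) hm (ellp_nonneg hC a) (by positivity)
  linarith

lemma small_phi {C : ℝ} (hC : 1 ≤ C) (k : ℕ) (h : 32 * ellp C k ≤ (k:ℝ)+1) :
    phip C k ≤ (k:ℝ)+1 := by
  have hl0 := ellp_nonneg hC k
  have hk0 : (0:ℝ) ≤ (k:ℝ) := Nat.cast_nonneg k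
  have h2 : Real.sqrt (((k:ℝ)+1)*ellp C k) ≤ (18/100)*((k:ℝ)+1) := by
    rw [show (18/100)*((k:ℝ)+1) = Real.sqrt (((18/100)*((k:ℝ)+1))^2) from
      (Real.sqrt_sq (by positivity)).symm]
    apply Real.sqrt_le_sqrt
    nlinarith
  rw [phip_def]
  linarith

lemma cond_holds {C : ℝ} (hC : 1 ≤ C) (k : ℕ) (h : 64*Real.log C + 576 ≤ (k:ℝ)) :
    32 * ellp C k ≤ (k:ℝ)+1 := by
  have hlog := log_aux (k:ℝ) (Nat.cast_nonneg k)
  rw [ellp_def]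
  linarith

set_option maxHeartbeats 2000000 in
lemma det_bound (C : ℝ) (hC : 1 ≤ C) (ε : ℝ) (hε : 0 < ε)
    (t : ℕ → ℝ) (hmono : Monotone t)
    (hb : ∀ k : ℕ, |t k - 2*((k:ℝ)+1)| ≤ phip C k)
    (V : ℝ) (hV : 10 ≤ V) :
    |Rpt t V| ≤ 400 * (C*V)^((1:ℝ)/2) * Real.log V ^ ((3:ℝ)/2 + ε) := by
  have hCpos : (0:ℝ) < C := by linarith
  set Lc := Real.log C with hLcdef
  have hLc0 : 0 ≤ Lc := Real.log_nonneg hC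
  have hLc2 : Lc ≤ 2*Real.sqrt C := log_le_two_sqrt hC
  have hlogV : 2 ≤ Real.log V := two_le_log hV
  set W := Real.log V ^ ((3:ℝ)/2+ε) with hWdef
  have hWlog : Real.log V ≤ W := by
    rw [hWdef]
    calc Real.log V = Real.log V ^ (1:ℝ) := (Real.rpow_one _).symm
      _ ≤ _ := Real.rpow_le_rpow_of_exponent_le (by linarith) (by linarith)
  have hW2 : 2 ≤ W := le_trans hlogV hWlog
  have hsqCV : (C*V)^((1:ℝ)/2) = Real.sqrt (C*V) := (Real.sqrt_eq_rpow _).symm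
  have hsqV3 : 3 ≤ Real.sqrt V := by
    rw [show (3:ℝ) = Real.sqrt 9 by
      rw [show (9:ℝ) = 3^2 by norm_num, Real.sqrt_sq (by norm_num)]]
    exact Real.sqrt_le_sqrt (by linarith)
  have hsqC1 : 1 ≤ Real.sqrt C := by
    rw [show (1:ℝ) = Real.sqrt 1 by simp]
    exact Real.sqrt_le_sqrt hC
  have hsqsplit : Real.sqrt (C*V) = Real.sqrt C * Real.sqrt V := Real.sqrt_mul hCpos.le V
  have hsq3 : 3 ≤ Real.sqrt (C*V) := by
    rw [hsqsplit]
    calc (3:ℝ) = 1*3 := by norm_num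
      _ ≤ Real.sqrt C * Real.sqrt V := mul_le_mul hsqC1 hsqV3 (by norm_num) (Real.sqrt_nonneg C)
  have hbig : ∀ k : ℕ, 64*Lc + 576 ≤ (k:ℝ) → V ≤ (k:ℝ) → V < t k := by
    intro k h1 h2
    have hphi := small_phi hC k (cond_holds hC k h1)
    have h3 := (abs_le.mp (hb k)).1
    linarith
  have hne : {k : ℕ | V < t k}.Nonempty := by
    refine ⟨Nat.ceil (max V (64*Lc+576)), hbig _ ?_ ?_⟩
    · exact le_trans (le_max_right _ _) (Nat.le_ceil _)
    · exact le_trans (le_max_left _ _) (Nat.le_ceil _)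
  obtain ⟨m, hmmem, hmlt⟩ : ∃ m : ℕ, V < t m ∧ ∀ j, j < m → t j ≤ V :=
    ⟨sInf {k : ℕ | V < t k}, Nat.sInf_mem hne,
      fun j hj => not_lt.mp (Nat.notMem_of_lt_sInf hj)⟩
  have hset : {j : ℕ | t j ≤ V} = Set.Iio m := by
    ext j
    simp only [mem_setOf_eq, mem_Iio]
    constructor
    · intro hj
      by_contra h
      push_neg at h
      exact absurd hj (not_le.mpr (lt_of_lt_of_le hmmem (hmono h)))
    · exact hmlt j
  have hcard : Nat.card {j : ℕ // t j ≤ V} = m := by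
    have e : {j : ℕ // t j ≤ V} ≃ Set.Iio m := Equiv.setCongr hset
    rw [Nat.card_congr e, ← Finset.coe_Iio, Nat.card_coe_set_eq,
      Set.ncard_coe_finset, Nat.card_Iio]
  have hRup : 2*(m:ℝ) - V ≤ phip C m := by
    rcases Nat.eq_zero_or_pos m with h0 | hpos
    · rw [h0]; push_cast; linarith [phip_nonneg hC 0]
    · obtain ⟨m', rfl⟩ : ∃ m', m = m'+1 := ⟨m-1, (Nat.succ_pred_eq_of_pos hpos).symm⟩
      have h1 := hmlt m' (Nat.lt_succ_self m')
      have h2 := (abs_le.mp (hb m')).1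
      have h3 : phip C m' ≤ phip C (m'+1) := phip_mono hC (Nat.le_succ m')
      push_cast
      push_cast at h2
      linarith
  have hRdown : V - 2*(m:ℝ) ≤ 2 + phip C m := by
    have h2 := (abs_le.mp (hb m)).2
    linarith
  have habs : |Rpt t V| ≤ 2 + phip C m := by
    rw [Rpt_def, hcard, abs_le]
    constructor
    · linarith
    · linarith [phip_nonneg hC m]
  have htarget : 2 + phip C m ≤ 400 * Real.sqrt (C*V) * W := by
    rcases le_or_gt (m:ℝ) (64*Lc + 577) with hcase | hcase
    · -- small m
      have hm2 : Real.log ((m:ℝ)+2) ≤ 9 + Lc/2 := by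
        have := log_aux (m:ℝ) (Nat.cast_nonneg m)
        linarith
      have hellm : ellp C m ≤ 2*Lc + 19 := by rw [ellp_def]; linarith
      have hA : ((m:ℝ)+1) * ellp C m ≤ (64*Lc+578) * (2*Lc+19) := by
        apply mul_le_mul (by linarith) hellm (ellp_nonneg hC m) (by linarith)
      have hprod : ((m:ℝ)+1) * ellp C m ≤ (12*Lc+105)^2 := by
        nlinarith [hA, hLc0, sq_nonneg Lc]
      have hsqrt : Real.sqrt (((m:ℝ)+1)*ellp C m) ≤ 12*Lc+105 := by
        rw [show 12*Lc+105 = Real.sqrt ((12*Lc+105)^2) from (Real.sqrt_sq (by positivity)).symm]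
        exact Real.sqrt_le_sqrt hprod
      have hphi : phip C m ≤ 56*Lc + 496 := by
        rw [phip_def]; linarith
      have hVW : (6:ℝ) ≤ Real.sqrt V * W := by
        calc (6:ℝ) = 3*2 := by norm_num
          _ ≤ Real.sqrt V * W := mul_le_mul hsqV3 hW2 (by norm_num) (by positivity)
      have t1 : Real.sqrt C * 6 ≤ Real.sqrt C * (Real.sqrt V * W) :=
        mul_le_mul_of_nonneg_left hVW (Real.sqrt_nonneg C)
      have t2 : 2400 * Real.sqrt C ≤ 400 * Real.sqrt (C*V) * W := by
        calc 2400 * Real.sqrt C = 400*(Real.sqrt C*6) := by ring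
          _ ≤ 400*(Real.sqrt C * (Real.sqrt V * W)) := by linarith
          _ = 400 * (Real.sqrt C * Real.sqrt V) * W := by ring
          _ = 400 * Real.sqrt (C*V) * W := by rw [hsqsplit]
      linarith [hphi, t2, hLc2, hsqC1]
    · -- large m
      have hm1 : m ≠ 0 := by
        rintro rfl
        push_cast at hcase
        linarith
      obtain ⟨m', rfl⟩ : ∃ m', m = m'+1 :=
        ⟨m-1, (Nat.succ_pred_eq_of_pos (Nat.pos_of_ne_zero hm1)).symm⟩
      have hm'big : 64*Lc + 576 ≤ (m':ℝ) := by push_cast at hcase; linarith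
      have hφm' : phip C m' ≤ (m':ℝ)+1 := small_phi hC m' (cond_holds hC m' hm'big)
      have h1 := hmlt m' (Nat.lt_succ_self m')
      have h2 := (abs_le.mp (hb m')).1
      have hmV : ((m':ℝ)+1) ≤ V := by linarith
      have hlogm : Real.log (((m'+1:ℕ):ℝ)+2) ≤ 1 + Real.log V := by
        have hle : (((m'+1:ℕ):ℝ)+2) ≤ 2*V := by push_cast; linarith
        have := Real.log_le_log (by positivity) hle
        rw [Real.log_mul (by norm_num) (by linarith)] at this
        have hl2 : Real.log 2 ≤ 1 := by
          rw [Real.log_le_iff_le_exp (by norm_num)]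
          have := Real.exp_one_gt_d9; linarith
        linarith
      have hell : ellp C (m'+1) ≤ Lc + 4*Real.log V := by
        rw [ellp_def]; linarith
      have hA : (((m'+1:ℕ):ℝ)+1) * ellp C (m'+1) ≤ (2*V) * (Lc + 4*Real.log V) := by
        apply mul_le_mul ?_ hell (ellp_nonneg hC (m'+1)) (by positivity)
        push_cast; linarith
      have hprod : (((m'+1:ℕ):ℝ)+1) * ellp C (m'+1) ≤ 2*V*Lc + 8*V*Real.log V := by
        have he : (2*V) * (Lc + 4*Real.log V) = 2*V*Lc + 8*V*Real.log V := by ring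
        linarith [hA, he.le]
      have hs1 : Real.sqrt (2*V*Lc + 8*V*Real.log V)
          ≤ Real.sqrt (2*V*Lc) + Real.sqrt (8*V*Real.log V) :=
        sqrt_add_le _ _ (by positivity) (by positivity)
      have hsC : Real.sqrt C ≤ C := sqrt_le_self' hC
      have hs2 : Real.sqrt (2*V*Lc) ≤ 2*Real.sqrt (C*V) := by
        have h4 : 2*V*Lc ≤ (2*Real.sqrt (C*V))^2 := by
          have he4 : (2*Real.sqrt (C*V))^2 = 4*(C*V) := by
            rw [mul_pow, Real.sq_sqrt (by positivity)]; norm_num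
          rw [he4]
          have h5 : Lc ≤ 2*C := by linarith
          have h6 : (2*V)*Lc ≤ (2*V)*(2*C) := mul_le_mul_of_nonneg_left h5 (by linarith)
          calc 2*V*Lc = (2*V)*Lc := by ring
            _ ≤ (2*V)*(2*C) := h6
            _ = 4*(C*V) := by ring
        calc Real.sqrt (2*V*Lc) ≤ Real.sqrt ((2*Real.sqrt (C*V))^2) := Real.sqrt_le_sqrt h4
          _ = 2*Real.sqrt (C*V) := Real.sqrt_sq (by positivity)
      have hs3 : Real.sqrt (8*V*Real.log V) ≤ 3*Real.sqrt V * Real.log V := by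
        have h4 : 8*V*Real.log V ≤ (3*Real.sqrt V*Real.log V)^2 := by
          have he4 : (3*Real.sqrt V*Real.log V)^2 = 9*V*(Real.log V)^2 := by
            rw [mul_pow, mul_pow, Real.sq_sqrt (show (0:ℝ) ≤ V by linarith)]; ring
          rw [he4]
          have h8 : 8*Real.log V ≤ 9*(Real.log V)^2 := by nlinarith [hlogV]
          have h7 : V*(8*Real.log V) ≤ V*(9*(Real.log V)^2) :=
            mul_le_mul_of_nonneg_left h8 (by linarith)
          linarith
        calc Real.sqrt (8*V*Real.log V) ≤ Real.sqrt ((3*Real.sqrt V*Real.log V)^2) :=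
            Real.sqrt_le_sqrt h4
          _ = 3*Real.sqrt V*Real.log V := Real.sqrt_sq (by positivity)
      have hsqrtfull : Real.sqrt ((((m'+1:ℕ):ℝ)+1) * ellp C (m'+1))
          ≤ 2*Real.sqrt (C*V) + 3*Real.sqrt V*Real.log V :=
        le_trans (Real.sqrt_le_sqrt hprod) (le_trans hs1 (by linarith))
      have hW0 : (0:ℝ) ≤ W := by linarith
      have hCVW2 : 3*W ≤ Real.sqrt (C*V)*W := mul_le_mul_of_nonneg_right hsq3 hW0
      have hCVW3 : Real.sqrt (C*V)*2 ≤ Real.sqrt (C*V)*W :=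
        mul_le_mul_of_nonneg_left hW2 (Real.sqrt_nonneg _)
      have b1 : 3*(Real.sqrt V*Real.log V) ≤ 3*(Real.sqrt (C*V)*W) := by
        have h0 : Real.sqrt V*Real.log V ≤ Real.sqrt (C*V)*W := by
          rw [hsqsplit]
          calc Real.sqrt V*Real.log V = 1*Real.sqrt V*Real.log V := by ring
            _ ≤ Real.sqrt C*Real.sqrt V*W := by
                apply mul_le_mul ?_ hWlog (by linarith) (by positivity)
                exact mul_le_mul_of_nonneg_right hsqC1 (Real.sqrt_nonneg V)
            _ = Real.sqrt C*Real.sqrt V*W := rfl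
        linarith
      have b2 : 4*Lc ≤ 4*(Real.sqrt (C*V)*W) := by
        have hsC : Real.sqrt C ≤ Real.sqrt (C*V) := by
          rw [hsqsplit]
          nth_rewrite 1 [← mul_one (Real.sqrt C)]
          apply mul_le_mul_of_nonneg_left (by linarith) (Real.sqrt_nonneg C)
        linarith [hCVW3, hLc2, Real.sqrt_nonneg C]
      have b3 : 16*Real.log V ≤ 6*(Real.sqrt (C*V)*W) := by linarith
      have b4 : 8*Real.sqrt (C*V) ≤ 4*(Real.sqrt (C*V)*W) := by linarith
      have b5 : (2:ℝ) ≤ Real.sqrt (C*V)*W := by linarith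
      have hphi : phip C (m'+1) ≤ 4*(2*Real.sqrt (C*V) + 3*(Real.sqrt V*Real.log V))
          + 4*(Lc + 4*Real.log V) := by
        rw [phip_def]
        have h8 := ellp_nonneg hC (m'+1)
        have h9 := hsqrtfull
        push_cast at h9 ⊢
        linarith [h9, hell]
      calc 2 + phip C (m'+1)
          ≤ 2 + (4*(2*Real.sqrt (C*V) + 3*(Real.sqrt V*Real.log V)) + 4*(Lc + 4*Real.log V)) := by
            linarith
        _ ≤ 400 * Real.sqrt (C*V) * W := by linarith [hphi, b1, b2, b3, b4, b5]
  rw [hsqCV]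
  linarith

section Prob
variable {Ω : Type} [MeasurableSpace Ω] (P : Measure Ω) [IsProbabilityMeasure P]
    (X : ℕ → Ω → ℝ) (hX : ∀ j, Measurable (X j))
    (hindep : iIndepFun X P)
    (hlaw : ∀ j, Measure.map (X j) P = expMeasure (1/2))
    (T : ℕ → Ω → ℝ) (hT : ∀ j ω, T j ω = ∑ i ∈ Finset.range (j+1), X i ω)
include hX hlaw in
lemma mgf_X {t : ℝ} (ht : t < 1/2) (j : ℕ) :
    Integrable (fun ω => Real.exp (t * X j ω)) P ∧ mgf (X j) P t = (1 - 2*t)⁻¹ := by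
  have hg : Measurable fun x : ℝ => Real.exp (t * x) := (measurable_const.mul measurable_id).exp
  have h1 : Integrable (fun x => Real.exp (t * x)) (Measure.map (X j) P) := by
    rw [hlaw j]; exact (exp_integral_expMeasure ht).1
  constructor
  · exact (integrable_map_measure hg.aestronglyMeasurable (hX j).aemeasurable).mp h1
  · unfold mgf
    rw [← integral_map (hX j).aemeasurable hg.aestronglyMeasurable, hlaw j]
    exact (exp_integral_expMeasure ht).2

include hX hT in
lemma T_eq_sum (k : ℕ) : T k = ∑ i ∈ Finset.range (k+1), X i := by
  funext ω; rw [hT]; simp [Finset.sum_apply]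

include hX hindep hlaw hT in
lemma mgf_T {t : ℝ} (ht : t < 1/2) (k : ℕ) :
    mgf (T k) P t = ((1 - 2*t)⁻¹)^(k+1) ∧ Integrable (fun ω => Real.exp (t * T k ω)) P := by
  rw [T_eq_sum X hX T hT k]
  constructor
  · rw [hindep.mgf_sum hX]
    rw [Finset.prod_congr rfl (fun i _ => (mgf_X P X hX hlaw ht i).2)]
    simp
  · exact hindep.integrable_exp_mul_sum hX (fun i _ => (mgf_X P X hX hlaw ht i).1)

include hX hindep hlaw hT in
lemma chernoff_upper {t : ℝ} (ht0 : 0 ≤ t) (ht : t < 1/2) (k : ℕ) (y : ℝ) :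
    P {ω | y ≤ T k ω} ≤ ENNReal.ofReal (Real.exp (-t*y) * ((1 - 2*t)⁻¹)^(k+1)) := by
  obtain ⟨hm, hi⟩ := mgf_T P X hX hindep hlaw T hT ht k
  have h := measure_ge_le_exp_mul_mgf (X := T k) (μ := P) y ht0 hi
  rw [hm] at h
  calc P {ω | y ≤ T k ω} = ENNReal.ofReal (P {ω | y ≤ T k ω}).toReal := by
        rw [ENNReal.ofReal_toReal (measure_ne_top _ _)]
    _ ≤ _ := ENNReal.ofReal_le_ofReal h

include hX hindep hlaw hT in
lemma chernoff_lower {t : ℝ} (ht0 : t ≤ 0) (k : ℕ) (y : ℝ) :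
    P {ω | T k ω ≤ y} ≤ ENNReal.ofReal (Real.exp (-t*y) * ((1 - 2*t)⁻¹)^(k+1)) := by
  have ht : t < 1/2 := lt_of_le_of_lt ht0 (by norm_num)
  obtain ⟨hm, hi⟩ := mgf_T P X hX hindep hlaw T hT ht k
  have h := measure_le_le_exp_mul_mgf (X := T k) (μ := P) y ht0 hi
  rw [hm] at h
  calc P {ω | T k ω ≤ y} = ENNReal.ofReal (P {ω | T k ω ≤ y}).toReal := by
        rw [ENNReal.ofReal_toReal (measure_ne_top _ _)]
    _ ≤ _ := ENNReal.ofReal_le_ofReal h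


include hX hindep hlaw hT in
lemma upper_tail (k : ℕ) {l : ℝ} (hl : 0 ≤ l) :
    P {ω | 2*((k:ℝ)+1) + 4*Real.sqrt (((k:ℝ)+1)*l) + 4*l ≤ T k ω}
      ≤ ENNReal.ofReal (Real.exp (-l)) := by
  set n : ℝ := (k:ℝ)+1 with hn
  have hnpos : (0:ℝ) < n := by positivity
  set u : ℝ := Real.sqrt (l/n) with hu
  have hu0 : (0:ℝ) ≤ u := Real.sqrt_nonneg _
  have hu2 : u^2 = l/n := Real.sq_sqrt (by positivity)
  have hl_eq : l = n * u^2 := by rw [hu2]; field_simp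
  have h1u : (0:ℝ) < 1 + u := by linarith
  set t : ℝ := u/(2*(1+u)) with htdef
  have ht0 : 0 ≤ t := by positivity
  have ht : t < 1/2 := by
    rw [htdef, div_lt_iff₀ (by linarith)]
    nlinarith
  have hne : (1+u) ≠ 0 := h1u.ne'
  have h12t : 1 - 2*t = (1+u)⁻¹ := by
    rw [htdef]; field_simp
    ring
  have hsq : Real.sqrt (n*l) = n*u := by
    rw [hl_eq, show n*(n*u^2) = (n*u)^2 by ring, Real.sqrt_sq (by positivity)]
  refine le_trans (chernoff_upper P X hX hindep hlaw T hT ht0 ht k _) (ENNReal.ofReal_le_ofReal ?_)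
  rw [h12t, inv_inv]
  have hlog : (1+u)^(k+1) = Real.exp (n * Real.log (1+u)) := by
    rw [hn]
    rw [show ((k:ℝ)+1) * Real.log (1+u) = ((k+1 : ℕ):ℝ) * Real.log (1+u) by push_cast; ring,
      Real.exp_nat_mul, Real.exp_log h1u]
  rw [hlog, ← Real.exp_add]
  apply Real.exp_le_exp.mpr
  have hlogu : Real.log (1+u) ≤ u := by
    have := Real.log_le_sub_one_of_pos h1u
    linarith
  have hkey2 : Real.log (1+u) + u^2 ≤ u*(1+2*u+2*u^2)/(1+u) := by
    rw [le_div_iff₀ h1u]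
    nlinarith [hu0, hlogu, sq_nonneg u, pow_nonneg hu0 3]
  have hyeq : 2*n + 4*Real.sqrt (n*l) + 4*l = 2*n*(1+2*u+2*u^2) := by
    rw [hsq, hl_eq]; ring
  rw [hyeq]
  have expand : t*(2*n*(1+2*u+2*u^2)) = n * (u*(1+2*u+2*u^2)/(1+u)) := by
    rw [htdef]; field_simp
  have hmul : n * (Real.log (1+u) + u^2) ≤ n * (u*(1+2*u+2*u^2)/(1+u)) :=
    mul_le_mul_of_nonneg_left hkey2 hnpos.le
  have : l = n * u^2 := hl_eq
  nlinarith [hmul, expand]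

include hX hindep hlaw hT in
lemma lower_tail (k : ℕ) {l : ℝ} (hl : 0 ≤ l) :
    P {ω | T k ω ≤ 2*((k:ℝ)+1) - 4*Real.sqrt (((k:ℝ)+1)*l)}
      ≤ ENNReal.ofReal (Real.exp (-l)) := by
  set n : ℝ := (k:ℝ)+1 with hn
  have hnpos : (0:ℝ) < n := by positivity
  set u : ℝ := Real.sqrt (l/n) with hu
  have hu0 : (0:ℝ) ≤ u := Real.sqrt_nonneg _
  have hu2 : u^2 = l/n := Real.sq_sqrt (by positivity)
  have hl_eq : l = n * u^2 := by rw [hu2]; field_simp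
  have h1u : (0:ℝ) < 1 + u := by linarith
  set t : ℝ := -(u/2) with htdef
  have ht0 : t ≤ 0 := by rw [htdef]; exact neg_nonpos.mpr (by positivity)
  have h12t : 1 - 2*t = 1+u := by rw [htdef]; ring
  have hsq : Real.sqrt (n*l) = n*u := by
    rw [hl_eq, show n*(n*u^2) = (n*u)^2 by ring, Real.sqrt_sq (by positivity)]
  refine le_trans (chernoff_lower P X hX hindep hlaw T hT ht0 k _) (ENNReal.ofReal_le_ofReal ?_)
  rw [h12t]
  have hpow : (1+u)^(k+1) = Real.exp (n * Real.log (1+u)) := by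
    rw [hn, show ((k:ℝ)+1) * Real.log (1+u) = ((k+1 : ℕ):ℝ) * Real.log (1+u) by push_cast; ring,
      Real.exp_nat_mul, Real.exp_log h1u]
  have hlog : ((1+u)⁻¹)^(k+1) = Real.exp (-(n * Real.log (1+u))) := by
    rw [inv_pow, hpow, ← Real.exp_neg]
  rw [hlog, ← Real.exp_add]
  apply Real.exp_le_exp.mpr
  have hlogu : u/(1+u) ≤ Real.log (1+u) := by
    have h := Real.log_le_sub_one_of_pos (show (0:ℝ) < (1+u)⁻¹ by positivity)
    rw [Real.log_inv] at h
    have : (1+u)⁻¹ - 1 = -(u/(1+u)) := by field_simp; ring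
    linarith [this ▸ h]
  have hkey2 : u - u^2 ≤ Real.log (1+u) := by
    have h2 : u - u^2 ≤ u/(1+u) := by
      rw [le_div_iff₀ h1u]
      nlinarith [pow_nonneg hu0 3]
    linarith
  have hyeq : 2*n - 4*Real.sqrt (n*l) = 2*n - 4*n*u := by rw [hsq]; ring
  rw [hyeq, htdef]
  have hmul : n * (u - u^2) ≤ n * Real.log (1+u) :=
    mul_le_mul_of_nonneg_left hkey2 hnpos.le
  nlinarith [hmul, hl_eq]


include hX hlaw in
lemma X_neg_prob (i : ℕ) : P {ω | X i ω < 0} = 0 := by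
  have h : {ω | X i ω < 0} = X i ⁻¹' (Set.Iio 0) := rfl
  rw [h, ← Measure.map_apply (hX i) measurableSet_Iio, hlaw i]
  show (gammaMeasure 1 (1/2)) (Set.Iio 0) = 0
  rw [gammaMeasure, withDensity_apply _ measurableSet_Iio]
  exact lintegral_gammaPDF_of_nonpos le_rfl

include hX hindep hlaw hT in
lemma good_prob (C : ℝ) (hC : 1 ≤ C) :
    ENNReal.ofReal (1 - C⁻¹) ≤
      P {ω | (∀ i, 0 ≤ X i ω) ∧ ∀ k:ℕ, |T k ω - 2*((k:ℝ)+1)| ≤ phip C k} := by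
  set G := {ω | (∀ i, 0 ≤ X i ω) ∧ ∀ k:ℕ, |T k ω - 2*((k:ℝ)+1)| ≤ phip C k} with hG
  set A : ℕ → Set Ω := fun k =>
    {ω | 2*((k:ℝ)+1) + 4*Real.sqrt (((k:ℝ)+1)*ellp C k) + 4*ellp C k ≤ T k ω} with hA
  set B : ℕ → Set Ω := fun k =>
    {ω | T k ω ≤ 2*((k:ℝ)+1) - 4*Real.sqrt (((k:ℝ)+1)*ellp C k)} with hB
  have hsub : Gᶜ ⊆ (⋃ i, {ω | X i ω < 0}) ∪ ⋃ k, (A k ∪ B k) := by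
    intro ω hω
    simp only [hG, mem_compl_iff, mem_setOf_eq, not_and_or, not_forall] at hω
    rcases hω with ⟨i, hi⟩ | ⟨k, hk⟩
    · exact Or.inl (mem_iUnion.2 ⟨i, by simpa using not_le.mp hi⟩)
    · refine Or.inr (mem_iUnion.2 ⟨k, ?_⟩)
      rw [abs_le, not_and_or] at hk
      have hl0 := ellp_nonneg hC k
      rcases hk with h | h
      · push_neg at h
        refine Or.inr ?_
        simp only [hB, mem_setOf_eq]
        rw [phip_def] at h
        linarith
      · push_neg at h
        refine Or.inl ?_
        simp only [hA, mem_setOf_eq]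
        rw [phip_def] at h
        linarith
  have hcompl : P Gᶜ ≤ ENNReal.ofReal C⁻¹ := by
    refine le_trans (measure_mono hsub) ?_
    refine le_trans (measure_union_le _ _) ?_
    have h1 : P (⋃ i, {ω | X i ω < 0}) = 0 := by
      refine le_antisymm (le_trans (measure_iUnion_le _) ?_) zero_le
      simp [X_neg_prob P X hX hlaw]
    rw [h1, zero_add]
    refine le_trans (measure_iUnion_le _) ?_
    have hterm : ∀ k, P (A k ∪ B k) ≤ ENNReal.ofReal (2 * Real.exp (-(ellp C k))) := by
      intro k
      refine le_trans (measure_union_le _ _) ?_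
      have hu := upper_tail P X hX hindep hlaw T hT k (ellp_nonneg hC k)
      have hl := lower_tail P X hX hindep hlaw T hT k (ellp_nonneg hC k)
      calc P (A k) + P (B k)
          ≤ ENNReal.ofReal (Real.exp (-(ellp C k))) + ENNReal.ofReal (Real.exp (-(ellp C k))) :=
            add_le_add hu hl
        _ = ENNReal.ofReal (2 * Real.exp (-(ellp C k))) := by
            rw [two_mul, ENNReal.ofReal_add (Real.exp_pos _).le (Real.exp_pos _).le]
    refine le_trans (ENNReal.tsum_le_tsum hterm) ?_
    rw [ENNReal.tsum_eq_iSup_nat]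
    refine iSup_le fun n => ?_
    rw [← ENNReal.ofReal_sum_of_nonneg (fun k _ => by positivity)]
    apply ENNReal.ofReal_le_ofReal
    have hCpos : (0:ℝ) < C := by linarith
    have hexp : ∀ k:ℕ, 2 * Real.exp (-(ellp C k)) ≤ C⁻¹ * (((k:ℝ)+2)^2)⁻¹ := by
      intro k
      have hk2 : (0:ℝ) < (k:ℝ)+2 := by positivity
      have hval : Real.exp (-(ellp C k)) = C⁻¹ * (((k:ℝ)+2)^2)⁻¹ * (Real.exp 1)⁻¹ := by
        rw [ellp_def,
          show -(Real.log C + 2*Real.log ((k:ℝ)+2) + 1)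
            = (-Real.log C) + (-(2*Real.log ((k:ℝ)+2))) + (-1) by ring,
          Real.exp_add, Real.exp_add, Real.exp_neg, Real.exp_neg, Real.exp_neg,
          Real.exp_log hCpos]
        congr 2
        rw [mul_comm, Real.exp_mul, Real.exp_log hk2]
        norm_num
      rw [hval]
      have he : (2:ℝ) ≤ Real.exp 1 := by
        have := Real.exp_one_gt_d9; linarith
      have hinv : (Real.exp 1)⁻¹ ≤ 1/2 := by
        rw [inv_le_iff_one_le_mul₀ (Real.exp_pos 1)] at *
        nlinarith
      have hpos2 : (0:ℝ) ≤ C⁻¹ * (((k:ℝ)+2)^2)⁻¹ := by positivity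
      nlinarith [hpos2]
    calc ∑ k ∈ Finset.range n, 2 * Real.exp (-(ellp C k))
        ≤ ∑ k ∈ Finset.range n, C⁻¹ * (((k:ℝ)+2)^2)⁻¹ :=
          Finset.sum_le_sum fun k _ => hexp k
      _ = C⁻¹ * ∑ k ∈ Finset.range n, (((k:ℝ)+2)^2)⁻¹ := by rw [Finset.mul_sum]
      _ ≤ C⁻¹ * 1 := by
          apply mul_le_mul_of_nonneg_left (sum_inv_sq n) (by positivity)
      _ = C⁻¹ := mul_one _
  have huniv : (1:ℝ≥0∞) ≤ P G + ENNReal.ofReal C⁻¹ := by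
    have h2 := measure_union_le (μ := P) G Gᶜ
    rw [union_compl_self, measure_univ] at h2
    exact le_trans h2 (add_le_add_right hcompl _)
  rw [ENNReal.ofReal_sub _ (by positivity), ENNReal.ofReal_one]
  exact tsub_le_iff_right.mpr huniv

end Prob
end AuxLemmas

/-- For every `ε > 0` there is `C_ε > 0` such that for all `C ≥ 1`,
`P{|R(V)| ≤ C_ε (CV)^(1/2) (log V)^(3/2+ε) for all V ≥ 10} ≥ 1 - C⁻¹`. -/
theorem stmt_9
    {Ω : Type} [MeasurableSpace Ω] (P : Measure Ω) [IsProbabilityMeasure P]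
    (X : ℕ → Ω → ℝ) (hX : ∀ j, Measurable (X j))
    (hindep : iIndepFun X P)
    (hlaw : ∀ j, Measure.map (X j) P = expMeasure (1/2))
    (T : ℕ → Ω → ℝ) (hT : ∀ j ω, T j ω = ∑ i ∈ Finset.range (j+1), X i ω)
    :
    ∀ ε : ℝ, 0 < ε → ∃ Cε : ℝ, 0 < Cε ∧
      ∀ C : ℝ, 1 ≤ C →
        ENNReal.ofReal (1 - C⁻¹) ≤
          P {ω | ∀ V : ℝ, 10 ≤ V →
            |Rpt (fun j => T j ω) V| ≤ Cε * (C * V) ^ ((1:ℝ)/2) * Real.log V ^ ((3:ℝ)/2 + ε)} := by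
  intro ε hε
  refine ⟨400, by norm_num, ?_⟩
  intro C hC
  have hsub : {ω | (∀ i, 0 ≤ X i ω) ∧ ∀ k:ℕ, |T k ω - 2*((k:ℝ)+1)| ≤ phip C k}
      ⊆ {ω | ∀ V : ℝ, 10 ≤ V →
        |Rpt (fun j => T j ω) V| ≤ 400 * (C * V) ^ ((1:ℝ)/2) * Real.log V ^ ((3:ℝ)/2 + ε)} := by
    intro ω hω
    obtain ⟨hpos, hbd⟩ := hω
    intro V hV
    have hmono : Monotone (fun j => T j ω) := by
      apply monotone_nat_of_le_succ
      intro n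
      show T n ω ≤ T (n+1) ω
      rw [hT (n+1), hT n, Finset.sum_range_succ (f := fun i => X i ω) (n := n+1)]
      linarith [hpos (n+1)]
    exact det_bound C hC ε hε _ hmono hbd V hV
  exact le_trans (good_prob P X hX hindep hlaw T hT C hC) (measure_mono hsub)
end

section
/- Suppose there is a constant K > 0 such that |R(V)| ≤ K·V^{1/2}·(log V)² for all V ≥ 10. Then: (i) for every c ∈ (1/4, 1/2) the limit lim_{A→∞} ( 2∑_{j : t_j ≤ A} t_j^{−2c} − A^{1−2c}/(1−2c) ) exists in ℝ; and (ii) for every A > 0 and every c > 1/4 the limit lim_{B→∞} ( 2∑_{j : A < t_j ≤ B} t_j^{−2c} − ∫_A^B V^{−2c} dV ) exists in ℝ. -/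
open MeasureTheory ProbabilityTheory Filter Topology Set
open scoped Classical

noncomputable def nuF (t : ℕ → ℝ) (V : ℝ) : ℕ := Nat.card {j : ℕ // t j ≤ V}

lemma finite_le {t : ℕ → ℝ} (htop : Tendsto t atTop atTop) (V : ℝ) :
    {j : ℕ | t j ≤ V}.Finite := by
  obtain ⟨N, hN⟩ := (htop.eventually (eventually_gt_atTop V)).exists_forall_of_atTop
  exact (Set.finite_Iio N).subset fun j hj => by
    by_contra h
    exact absurd (hN j (not_lt.1 h)) (not_lt.2 hj)

lemma nuF_eq_ncard (t : ℕ → ℝ) (V : ℝ) : nuF t V = {j : ℕ | t j ≤ V}.ncard := by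
  rw [nuF, ← Nat.card_coe_set_eq]
  rfl

lemma le_iff_lt_nuF {t : ℕ → ℝ} (hmono : StrictMono t) (htop : Tendsto t atTop atTop)
    {j : ℕ} {V : ℝ} : t j ≤ V ↔ j < nuF t V := by
  rw [nuF_eq_ncard]
  constructor
  · intro h
    have hsub : Set.Iic j ⊆ {i : ℕ | t i ≤ V} := fun i hi =>
      le_trans (hmono.monotone hi) h
    have h2 : (Set.Iic j).ncard ≤ {i : ℕ | t i ≤ V}.ncard :=
      Set.ncard_le_ncard hsub (finite_le htop V)
    have hIic : (Set.Iic j).ncard = j + 1 := by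
      rw [show (Set.Iic j) = ↑(Finset.Iic j) by simp, Set.ncard_coe_finset, Nat.card_Iic]
    omega
  · intro h
    by_contra hc
    have hsub : {i : ℕ | t i ≤ V} ⊆ Set.Iio j := by
      intro i hi
      by_contra hij
      exact hc (le_trans (hmono.monotone (not_lt.1 hij)) hi)
    have h2 : {i : ℕ | t i ≤ V}.ncard ≤ (Set.Iio j).ncard :=
      Set.ncard_le_ncard hsub (Set.finite_Iio j)
    have hIio : (Set.Iio j).ncard = j := by
      rw [show (Set.Iio j) = ↑(Finset.Iio j) by simp, Set.ncard_coe_finset, Nat.card_Iio]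
    omega

lemma nuF_mono {t : ℕ → ℝ} (htop : Tendsto t atTop atTop) : Monotone (nuF t) := by
  intro V W h
  rw [nuF_eq_ncard, nuF_eq_ncard]
  exact Set.ncard_le_ncard (fun j hj => le_trans hj h) (finite_le htop W)

lemma tsum_cond_eq {t : ℕ → ℝ} (hmono : StrictMono t) (htop : Tendsto t atTop atTop)
    (f : ℕ → ℝ) (A B : ℝ) :
    (∑' j : ℕ, if A < t j ∧ t j ≤ B then f j else 0)
      = ∑ j ∈ Finset.Ico (nuF t A) (nuF t B), f j := by
  rw [tsum_eq_sum (s := Finset.Ico (nuF t A) (nuF t B))]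
  · refine Finset.sum_congr rfl fun j hj => ?_
    rw [Finset.mem_Ico] at hj
    have h1 : ¬ t j ≤ A := fun h => absurd ((le_iff_lt_nuF hmono htop).1 h) (not_lt.2 hj.1)
    exact if_pos ⟨not_le.1 h1, (le_iff_lt_nuF hmono htop).2 hj.2⟩
  · intro j hj
    rw [Finset.mem_Ico, not_and_or] at hj
    rw [if_neg]
    rintro ⟨h1, h2⟩
    have hB : j < nuF t B := (le_iff_lt_nuF hmono htop).1 h2
    have hA : ¬ j < nuF t A := fun h =>
      absurd ((le_iff_lt_nuF hmono htop).2 h) (not_le.2 h1)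
    omega

lemma tsum_le_eq {t : ℕ → ℝ} (hmono : StrictMono t) (htop : Tendsto t atTop atTop)
    (f : ℕ → ℝ) (B : ℝ) :
    (∑' j : ℕ, if t j ≤ B then f j else 0) = ∑ j ∈ Finset.range (nuF t B), f j := by
  rw [tsum_eq_sum (s := Finset.range (nuF t B))]
  · exact Finset.sum_congr rfl fun j hj =>
      if_pos ((le_iff_lt_nuF hmono htop).2 (Finset.mem_range.1 hj))
  · exact fun j hj => if_neg fun h =>
      hj (Finset.mem_range.2 ((le_iff_lt_nuF hmono htop).1 h))

lemma integrableOn_rpow_Ioc {e A B : ℝ} (hA : 0 < A) :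
    IntegrableOn (fun V : ℝ => V ^ e) (Set.Ioc A B) := by
  have hcont : ContinuousOn (fun V : ℝ => V ^ e) (Set.Icc A B) := fun V hV =>
    (Real.continuousAt_rpow_const V e (Or.inl (ne_of_gt (lt_of_lt_of_le hA hV.1)))).continuousWithinAt
  exact (hcont.integrableOn_Icc).mono_set Set.Ioc_subset_Icc_self

lemma rpow_boundary {c a B : ℝ} (hc : 0 < c) (ha : 0 < a) (haB : a ≤ B) :
    a ^ (-(2*c)) = B ^ (-(2*c)) + ∫ V in Set.Ioc a B, (2*c) * V ^ (-(2*c)-1) := by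
  have h0 : (0:ℝ) ∉ Set.uIcc a B := Set.notMem_uIcc_of_lt ha (lt_of_lt_of_le ha haB)
  have hne : (-(2*c)-1) ≠ -1 := by intro h; nlinarith [h]
  have h1 : ∫ V in a..B, V ^ (-(2*c)-1) = (B ^ (-(2*c)-1+1) - a ^ (-(2*c)-1+1)) / (-(2*c)-1+1) :=
    integral_rpow (Or.inr ⟨hne, h0⟩)
  have he : (-(2*c)-1+1) = -(2*c) := by ring
  rw [he] at h1
  have h2 : ∫ V in Set.Ioc a B, (2*c) * V ^ (-(2*c)-1)
      = (2*c) * ∫ V in a..B, V ^ (-(2*c)-1) := by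
    rw [intervalIntegral.integral_of_le haB, ← integral_const_mul]
  rw [h2, h1]
  field_simp
  ring

lemma abelSum {t : ℕ → ℝ} (hpos : ∀ j, 0 < t j) (hmono : StrictMono t)
    (htop : Tendsto t atTop atTop)
    {c A B : ℝ} (hc : 0 < c) (hA : 0 < A) (hAB : A ≤ B) :
    (∑' j : ℕ, if A < t j ∧ t j ≤ B then t j ^ (-(2*c)) else 0)
      = ((nuF t B : ℝ) - (nuF t A : ℝ)) * B ^ (-(2*c))
        + ∫ V in Set.Ioc A B,
            ((nuF t V : ℝ) - (nuF t A : ℝ)) * ((2*c) * V ^ (-(2*c)-1)) := by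
  set n₀ := nuF t A with hn₀
  set n₁ := nuF t B with hn₁
  have hn : n₀ ≤ n₁ := nuF_mono htop hAB
  set g : ℝ → ℝ := fun V => (2*c) * V ^ (-(2*c)-1) with hg
  have hgint : IntegrableOn g (Set.Ioc A B) := (integrableOn_rpow_Ioc hA).const_mul (2*c)
  have hmem : ∀ j ∈ Finset.Ico n₀ n₁, A < t j ∧ t j ≤ B := by
    intro j hj
    rw [Finset.mem_Ico] at hj
    exact ⟨not_le.1 fun h => absurd ((le_iff_lt_nuF hmono htop).1 h) (not_lt.2 hj.1),
      (le_iff_lt_nuF hmono htop).2 hj.2⟩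
  rw [tsum_cond_eq hmono htop _ A B, ← hn₀, ← hn₁]
  have hterm : ∀ j ∈ Finset.Ico n₀ n₁,
      t j ^ (-(2*c)) = B ^ (-(2*c)) + ∫ V in Set.Ioc A B, (Set.Ioc (t j) B).indicator g V := by
    intro j hj
    obtain ⟨h1, h2⟩ := hmem j hj
    rw [setIntegral_indicator measurableSet_Ioc,
      show Set.Ioc A B ∩ Set.Ioc (t j) B = Set.Ioc (t j) B by
        rw [Set.Ioc_inter_Ioc, max_eq_right h1.le, min_self]]
    exact rpow_boundary hc (hpos j) h2
  rw [Finset.sum_congr rfl hterm, Finset.sum_add_distrib, Finset.sum_const, Nat.card_Ico,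
    ← integral_finset_sum _ (fun j _ => hgint.indicator measurableSet_Ioc),
    nsmul_eq_mul, Nat.cast_sub hn]
  congr 1
  apply setIntegral_congr_ae measurableSet_Ioc
  have hae : ∀ᵐ V : ℝ, V ∉ Set.range t := by
    rw [ae_iff]
    convert Set.Countable.measure_zero (Set.countable_range t) volume using 2 <;> ext V <;> simp
  filter_upwards [hae] with V hV hVmem
  have hm0 : n₀ ≤ nuF t V := nuF_mono htop hVmem.1.le
  have hm1 : nuF t V ≤ n₁ := nuF_mono htop hVmem.2
  have hind : ∀ j, (Set.Ioc (t j) B).indicator g V = if j < nuF t V then g V else 0 := by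
    intro j
    by_cases h : j < nuF t V
    · rw [if_pos h, Set.indicator_of_mem]
      exact ⟨lt_of_le_of_ne ((le_iff_lt_nuF hmono htop).2 h) (fun he => hV ⟨j, he⟩), hVmem.2⟩
    · rw [if_neg h, Set.indicator_of_notMem]
      intro hmem2
      exact h ((le_iff_lt_nuF hmono htop).1 hmem2.1.le)
  calc ∑ j ∈ Finset.Ico n₀ n₁, (Set.Ioc (t j) B).indicator g V
      = ∑ j ∈ Finset.Ico n₀ n₁, if j < nuF t V then g V else 0 :=
        Finset.sum_congr rfl (fun j _ => hind j)
    _ = (∑ j ∈ Finset.Ico n₀ (nuF t V), if j < nuF t V then g V else 0)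
        + ∑ j ∈ Finset.Ico (nuF t V) n₁, if j < nuF t V then g V else 0 :=
        (Finset.sum_Ico_consecutive _ hm0 hm1).symm
    _ = (∑ j ∈ Finset.Ico n₀ (nuF t V), g V) + ∑ j ∈ Finset.Ico (nuF t V) n₁, (0:ℝ) := by
        congr 1
        · exact Finset.sum_congr rfl (fun j hj => if_pos ((Finset.mem_Ico.1 hj).2))
        · exact Finset.sum_congr rfl (fun j hj => if_neg (not_lt.2 (Finset.mem_Ico.1 hj).1))
    _ = ((nuF t V : ℝ) - (n₀ : ℝ)) * g V := by
        rw [Finset.sum_const, Finset.sum_const, smul_zero, add_zero, Nat.card_Ico,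
          nsmul_eq_mul, Nat.cast_sub hm0]

lemma contOn_rpow {e A B : ℝ} (hA : 0 < A) :
    ContinuousOn (fun V : ℝ => V ^ e) (Set.Icc A B) := fun V hV =>
  (Real.continuousAt_rpow_const V e
    (Or.inl (ne_of_gt (lt_of_lt_of_le hA hV.1)))).continuousWithinAt

lemma contOn_rpow_Ioi {e : ℝ} :
    ContinuousOn (fun V : ℝ => V ^ e) (Set.Ioi (0:ℝ)) := fun V hV =>
  (Real.continuousAt_rpow_const V e (Or.inl (ne_of_gt hV))).continuousWithinAt

lemma starstar {c A B : ℝ} (hc : 0 < c) (hA : 0 < A) (hAB : A ≤ B) :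
    ∫ V in Set.Ioc A B, V ^ (-(2*c))
      = (B - A) * B ^ (-(2*c))
        + ∫ V in Set.Ioc A B, (V - A) * ((2*c) * V ^ (-(2*c)-1)) := by
  set f : ℝ → ℝ := fun x => ∫ V in A..x, V ^ (-(2*c)) with hf
  set g : ℝ → ℝ := fun x =>
    (x - A) * x ^ (-(2*c)) + ∫ V in A..x, (V - A) * ((2*c) * V ^ (-(2*c)-1)) with hgdef
  have hint1 : ∀ x ∈ Set.Icc A B, IntervalIntegrable (fun V : ℝ => V ^ (-(2*c))) volume A x := by
    intro x hx
    apply ContinuousOn.intervalIntegrable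
    rw [Set.uIcc_of_le hx.1]
    exact contOn_rpow hA
  have hcont2 : ContinuousOn (fun V : ℝ => (V - A) * ((2*c) * V ^ (-(2*c)-1))) (Set.Ioi 0) :=
    ((continuous_id.sub continuous_const).continuousOn).mul (contOn_rpow_Ioi.const_smul (2*c))
  have hint2 : ∀ x ∈ Set.Icc A B,
      IntervalIntegrable (fun V : ℝ => (V - A) * ((2*c) * V ^ (-(2*c)-1))) volume A x := by
    intro x hx
    apply ContinuousOn.intervalIntegrable
    rw [Set.uIcc_of_le hx.1]
    exact hcont2.mono fun V hV => lt_of_lt_of_le hA hV.1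
  have hdf : ∀ x ∈ Set.Icc A B, HasDerivAt f (x ^ (-(2*c))) x := by
    intro x hx
    have hx0 : 0 < x := lt_of_lt_of_le hA hx.1
    exact intervalIntegral.integral_hasDerivAt_right (hint1 x hx)
      (ContinuousOn.stronglyMeasurableAtFilter isOpen_Ioi contOn_rpow_Ioi x hx0)
      (Real.continuousAt_rpow_const x _ (Or.inl hx0.ne'))
  have hdg : ∀ x ∈ Set.Icc A B, HasDerivAt g (x ^ (-(2*c))) x := by
    intro x hx
    have hx0 : 0 < x := lt_of_lt_of_le hA hx.1
    have h1 : HasDerivAt (fun x : ℝ => (x - A) * x ^ (-(2*c)))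
        (1 * x ^ (-(2*c)) + (x - A) * (-(2*c) * x ^ (-(2*c) - 1))) x :=
      ((hasDerivAt_id x).sub_const A).mul (Real.hasDerivAt_rpow_const (Or.inl hx0.ne'))
    have h2 : HasDerivAt (fun x : ℝ => ∫ V in A..x, (V - A) * ((2*c) * V ^ (-(2*c)-1)))
        ((x - A) * ((2*c) * x ^ (-(2*c)-1))) x :=
      intervalIntegral.integral_hasDerivAt_right (hint2 x hx)
        (ContinuousOn.stronglyMeasurableAtFilter isOpen_Ioi hcont2 x hx0)
        (hcont2.continuousAt (Ioi_mem_nhds hx0))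
    have := h1.add h2
    exact this.congr_deriv (by ring)
  refine Eq.trans ?_ (Eq.trans
    (eq_of_has_deriv_right_eq (f' := fun x => x ^ (-(2*c)))
      (fun x hx => (hdf x (Set.mem_Icc_of_Ico hx)).hasDerivWithinAt)
      (fun x hx => (hdg x (Set.mem_Icc_of_Ico hx)).hasDerivWithinAt)
      (fun x hx => (hdf x hx).continuousAt.continuousWithinAt)
      (fun x hx => (hdg x hx).continuousAt.continuousWithinAt)
      (by simp [hf, hgdef]) B (Set.right_mem_Icc.2 hAB)) ?_)
  · show _ = ∫ V in A..B, V ^ (-(2*c))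
    rw [intervalIntegral.integral_of_le hAB]
  · show (B - A) * B ^ (-(2*c)) + (∫ V in A..B, (V - A) * (2 * c * V ^ (-(2*c) - 1))) = _
    rw [intervalIntegral.integral_of_le hAB]

lemma Rpt_eq (t : ℕ → ℝ) (V : ℝ) : Rpt t V = 2*(nuF t V : ℝ) - V := rfl

lemma nuF_measurable {t : ℕ → ℝ} (htop : Tendsto t atTop atTop) :
    Measurable (fun V => (nuF t V : ℝ)) :=
  Monotone.measurable (fun V W h => Nat.cast_le.2 (nuF_mono htop h))

lemma integrableOn_nu_mul {t : ℕ → ℝ} (htop : Tendsto t atTop atTop)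
    {c A B : ℝ} (hA : 0 < A) (hAB : A ≤ B) :
    IntegrableOn (fun V => ((nuF t V : ℝ) - (nuF t A : ℝ)) * ((2*c) * V ^ (-(2*c)-1)))
      (Set.Ioc A B) := by
  have hgint : IntegrableOn (fun V : ℝ => (2*c) * V ^ (-(2*c)-1)) (Set.Ioc A B) :=
    (integrableOn_rpow_Ioc hA).const_mul (2*c)
  refine Integrable.mono' (hgint.abs.const_mul (nuF t B)) ?_ ?_
  · refine AEStronglyMeasurable.mul
      (((nuF_measurable htop).sub measurable_const).aestronglyMeasurable.restrict)
      (ContinuousOn.aestronglyMeasurable ?_ measurableSet_Ioc)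
    exact (contOn_rpow_Ioi.const_smul (2*c)).mono fun V hV => lt_trans hA hV.1
  · rw [ae_restrict_iff' measurableSet_Ioc]
    refine Eventually.of_forall fun V hV => ?_
    have h0 : (nuF t A : ℝ) ≤ nuF t V := Nat.cast_le.2 (nuF_mono htop hV.1.le)
    have h1 : (nuF t V : ℝ) ≤ nuF t B := Nat.cast_le.2 (nuF_mono htop hV.2)
    rw [Real.norm_eq_abs, abs_mul]
    apply mul_le_mul ?_ le_rfl (abs_nonneg _) (Nat.cast_nonneg _)
    rw [abs_of_nonneg (by linarith)]
    have : (0:ℝ) ≤ nuF t A := Nat.cast_nonneg _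
    linarith

lemma integrableOn_sub_mul {c A B : ℝ} (hA : 0 < A) :
    IntegrableOn (fun V => (V - A) * ((2*c) * V ^ (-(2*c)-1))) (Set.Ioc A B) := by
  have hcont : ContinuousOn (fun V : ℝ => (V - A) * ((2*c) * V ^ (-(2*c)-1))) (Set.Icc A B) :=
    ((continuous_id.sub continuous_const).continuousOn).mul ((contOn_rpow hA).const_smul (2*c))
  exact hcont.integrableOn_Icc.mono_set Set.Ioc_subset_Icc_self

lemma RInt_eq {t : ℕ → ℝ} (hpos : ∀ j, 0 < t j) (hmono : StrictMono t)
    (htop : Tendsto t atTop atTop) {c A B : ℝ} (hc : 0 < c) (hA : 0 < A) (hAB : A ≤ B) :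
    RInt t c A B = (Rpt t B - Rpt t A) * B ^ (-(2*c))
      + ∫ V in Set.Ioc A B, (Rpt t V - Rpt t A) * ((2*c) * V ^ (-(2*c)-1)) := by
  have h3 : (fun V => (Rpt t V - Rpt t A) * ((2*c) * V ^ (-(2*c)-1)))
      = fun V => 2 * (((nuF t V : ℝ) - (nuF t A : ℝ)) * ((2*c) * V ^ (-(2*c)-1)))
          - (V - A) * ((2*c) * V ^ (-(2*c)-1)) := by
    funext V
    simp only [Rpt_eq]
    ring
  rw [RInt, abelSum hpos hmono htop hc hA hAB, starstar hc hA hAB, h3,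
    integral_sub ((integrableOn_nu_mul htop hA hAB).const_mul 2) (integrableOn_sub_mul hA),
    integral_const_mul]
  simp only [Rpt_eq]
  ring

lemma Rpt_measurable {t : ℕ → ℝ} (htop : Tendsto t atTop atTop) :
    Measurable (Rpt t) := by
  have : Rpt t = fun V => 2*(nuF t V : ℝ) - V := funext fun V => Rpt_eq t V
  rw [this]
  exact ((nuF_measurable htop).const_mul 2).sub measurable_id

lemma rpow_combine {V c δ : ℝ} (hV : 0 < V) (hδ : δ = (c - 1/4)/2) :
    V ^ ((1:ℝ)/2) * (V ^ δ) ^ 2 * V ^ (-(2*c)-1) = V ^ (-c - 3/4) := by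
  rw [← Real.rpow_natCast (V ^ δ) 2, ← Real.rpow_mul hV.le,
    ← Real.rpow_add hV, ← Real.rpow_add hV]
  congr 1
  rw [hδ]
  push_cast
  ring

lemma integrableOn_G {t : ℕ → ℝ} (htop : Tendsto t atTop atTop)
    {K : ℝ} (hK : 0 < K)
    (hbound : ∀ V : ℝ, 10 ≤ V → |Rpt t V| ≤ K * V ^ ((1:ℝ)/2) * Real.log V ^ 2)
    {c A : ℝ} (hc : 1/4 < c) (hA : 0 < A) :
    IntegrableOn (fun V => (Rpt t V - Rpt t A) * ((2*c) * V ^ (-(2*c)-1)))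
      (Set.Ioi A) := by
  have hc0 : (0:ℝ) < c := by linarith
  set V₀ : ℝ := max A 10 with hV₀
  have hV₀10 : (10:ℝ) ≤ V₀ := le_max_right A 10
  have hV₀0 : (0:ℝ) < V₀ := by linarith
  have hAV₀ : A ≤ V₀ := le_max_left A 10
  set δ : ℝ := (c - 1/4)/2 with hδdef
  have hδ : 0 < δ := by rw [hδdef]; linarith
  have hmeas : Measurable (fun V => Rpt t V - Rpt t A) :=
    (Rpt_measurable htop).sub measurable_const
  rw [← Set.Ioc_union_Ioi_eq_Ioi hAV₀]
  apply IntegrableOn.union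
  · -- bounded piece
    have hgint : IntegrableOn (fun V : ℝ => (2*c) * V ^ (-(2*c)-1)) (Set.Ioc A V₀) :=
      (integrableOn_rpow_Ioc hA).const_mul (2*c)
    set M : ℝ := 2*(nuF t V₀ : ℝ) + V₀ + |Rpt t A| with hM
    refine Integrable.mono' (hgint.abs.const_mul M) ?_ ?_
    · refine AEStronglyMeasurable.mul (hmeas.aestronglyMeasurable.restrict)
        (ContinuousOn.aestronglyMeasurable ?_ measurableSet_Ioc)
      exact (contOn_rpow_Ioi.const_smul (2*c)).mono fun V hV => lt_trans hA hV.1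
    · rw [ae_restrict_iff' measurableSet_Ioc]
      refine Eventually.of_forall fun V hV => ?_
      rw [Real.norm_eq_abs, abs_mul]
      apply mul_le_mul ?_ le_rfl (abs_nonneg _) ?_
      · have h1 : (0:ℝ) ≤ nuF t V := Nat.cast_nonneg _
        have h2 : (nuF t V : ℝ) ≤ nuF t V₀ := Nat.cast_le.2 (nuF_mono htop hV.2)
        have h3 : 0 < V := lt_trans hA hV.1
        have h4 : V ≤ V₀ := hV.2
        have h5 : Rpt t V - Rpt t A = 2*(nuF t V : ℝ) - V - Rpt t A := by rw [Rpt_eq]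
        rw [h5, hM]
        have := abs_nonneg (Rpt t A)
        have := neg_abs_le (Rpt t A)
        have := le_abs_self (Rpt t A)
        rw [abs_le]
        constructor <;> nlinarith
      · rw [hM]
        have : (0:ℝ) ≤ nuF t V₀ := Nat.cast_nonneg _
        have := abs_nonneg (Rpt t A)
        linarith
  · -- tail piece
    have hD : IntegrableOn
        (fun V : ℝ => (2*c*K/δ^2) * V ^ (-c - 3/4) + (|Rpt t A| * (2*c)) * V ^ (-(2*c)-1))
        (Set.Ioi V₀) := by
      apply Integrable.add
      · exact (((integrableOn_Ioi_rpow_iff hV₀0).2 (by linarith)).const_mul _)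
      · exact (((integrableOn_Ioi_rpow_iff hV₀0).2 (by linarith)).const_mul _)
    refine Integrable.mono' hD ?_ ?_
    · refine AEStronglyMeasurable.mul (hmeas.aestronglyMeasurable.restrict)
        (ContinuousOn.aestronglyMeasurable ?_ measurableSet_Ioi)
      exact (contOn_rpow_Ioi.const_smul (2*c)).mono fun V hV => lt_trans hV₀0 hV
    · rw [ae_restrict_iff' measurableSet_Ioi]
      refine Eventually.of_forall fun V hV => ?_
      have hV10 : (10:ℝ) ≤ V := le_of_lt (lt_of_le_of_lt hV₀10 hV)
      have hV0 : (0:ℝ) < V := by linarith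
      have hV1 : (1:ℝ) ≤ V := by linarith
      have hgpos : (0:ℝ) ≤ (2*c) * V ^ (-(2*c)-1) :=
        mul_nonneg (by linarith) (Real.rpow_nonneg hV0.le _)
      rw [Real.norm_eq_abs, abs_mul, abs_of_nonneg hgpos]
      have hR : |Rpt t V - Rpt t A| ≤ K * V ^ ((1:ℝ)/2) * Real.log V ^ 2 + |Rpt t A| :=
        le_trans (abs_sub _ _) (by have := hbound V hV10; linarith)
      calc |Rpt t V - Rpt t A| * ((2*c) * V ^ (-(2*c)-1))
          ≤ (K * V ^ ((1:ℝ)/2) * Real.log V ^ 2 + |Rpt t A|) * ((2*c) * V ^ (-(2*c)-1)) :=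
            mul_le_mul_of_nonneg_right hR hgpos
        _ ≤ (K * V ^ ((1:ℝ)/2) * (V ^ δ / δ) ^ 2 + |Rpt t A|) * ((2*c) * V ^ (-(2*c)-1)) := by
            apply mul_le_mul_of_nonneg_right ?_ hgpos
            have hlog : 0 ≤ Real.log V := Real.log_nonneg hV1
            have hle : Real.log V ≤ V ^ δ / δ := Real.log_le_rpow_div hV0.le hδ
            have hsq : Real.log V ^ 2 ≤ (V ^ δ / δ) ^ 2 := pow_le_pow_left₀ hlog hle 2
            have hVp : 0 ≤ K * V ^ ((1:ℝ)/2) := mul_nonneg hK.le (Real.rpow_nonneg hV0.le _)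
            nlinarith
        _ = (2*c*K/δ^2) * (V ^ ((1:ℝ)/2) * (V ^ δ) ^ 2 * V ^ (-(2*c)-1))
              + (|Rpt t A| * (2*c)) * V ^ (-(2*c)-1) := by
            field_simp
        _ = (2*c*K/δ^2) * V ^ (-c - 3/4) + (|Rpt t A| * (2*c)) * V ^ (-(2*c)-1) := by
            rw [rpow_combine hV0 hδdef]

lemma boundary_tendsto {t : ℕ → ℝ}
    {K : ℝ} (hK : 0 < K)
    (hbound : ∀ V : ℝ, 10 ≤ V → |Rpt t V| ≤ K * V ^ ((1:ℝ)/2) * Real.log V ^ 2)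
    {c A : ℝ} (hc : 1/4 < c) :
    Tendsto (fun B => (Rpt t B - Rpt t A) * B ^ (-(2*c))) atTop (𝓝 0) := by
  set δ : ℝ := (c - 1/4)/2 with hδdef
  have hδ : 0 < δ := by rw [hδdef]; linarith
  set g : ℝ → ℝ := fun B => (K/δ^2) * B ^ (-(c - 1/4)) + |Rpt t A| * B ^ (-(2*c)) with hg
  have hgten : Tendsto g atTop (𝓝 ((K/δ^2) * 0 + |Rpt t A| * 0)) := by
    exact ((tendsto_rpow_neg_atTop (by linarith : (0:ℝ) < c - 1/4)).const_mul _).add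
      ((tendsto_rpow_neg_atTop (by linarith : (0:ℝ) < 2*c)).const_mul _)
  rw [show (K/δ^2) * 0 + |Rpt t A| * 0 = 0 by ring] at hgten
  apply squeeze_zero_norm' ?_ hgten
  filter_upwards [eventually_ge_atTop (10:ℝ)] with B hB10
  have hB0 : (0:ℝ) < B := by linarith
  have hB1 : (1:ℝ) ≤ B := by linarith
  have hrp : (0:ℝ) ≤ B ^ (-(2*c)) := Real.rpow_nonneg hB0.le _
  rw [Real.norm_eq_abs, abs_mul, abs_of_nonneg hrp]
  have hR : |Rpt t B - Rpt t A| ≤ K * B ^ ((1:ℝ)/2) * Real.log B ^ 2 + |Rpt t A| :=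
    le_trans (abs_sub _ _) (by have := hbound B hB10; linarith)
  have hlog : 0 ≤ Real.log B := Real.log_nonneg hB1
  have hle : Real.log B ≤ B ^ δ / δ := Real.log_le_rpow_div hB0.le hδ
  have hsq : Real.log B ^ 2 ≤ (B ^ δ / δ) ^ 2 := pow_le_pow_left₀ hlog hle 2
  have hKB : (0:ℝ) ≤ K * B ^ ((1:ℝ)/2) := mul_nonneg hK.le (Real.rpow_nonneg hB0.le _)
  have hkey : B ^ ((1:ℝ)/2) * (B ^ δ) ^ 2 * B ^ (-(2*c)) = B ^ (-(c - 1/4)) := by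
    rw [← Real.rpow_natCast (B ^ δ) 2, ← Real.rpow_mul hB0.le,
      ← Real.rpow_add hB0, ← Real.rpow_add hB0]
    congr 1
    rw [hδdef]
    push_cast
    ring
  calc |Rpt t B - Rpt t A| * B ^ (-(2*c))
      ≤ (K * B ^ ((1:ℝ)/2) * Real.log B ^ 2 + |Rpt t A|) * B ^ (-(2*c)) :=
        mul_le_mul_of_nonneg_right hR hrp
    _ ≤ (K * B ^ ((1:ℝ)/2) * (B ^ δ / δ) ^ 2 + |Rpt t A|) * B ^ (-(2*c)) := by
        apply mul_le_mul_of_nonneg_right ?_ hrp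
        nlinarith
    _ = (K/δ^2) * (B ^ ((1:ℝ)/2) * (B ^ δ) ^ 2 * B ^ (-(2*c))) + |Rpt t A| * B ^ (-(2*c)) := by
        field_simp
    _ = g B := by rw [hkey]

lemma key_tendsto {t : ℕ → ℝ} (hpos : ∀ j, 0 < t j) (hmono : StrictMono t)
    (htop : Tendsto t atTop atTop)
    {K : ℝ} (hK : 0 < K)
    (hbound : ∀ V : ℝ, 10 ≤ V → |Rpt t V| ≤ K * V ^ ((1:ℝ)/2) * Real.log V ^ 2)
    {A : ℝ} (hA : 0 < A) {c : ℝ} (hc : 1/4 < c) :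
    Tendsto (fun B => RInt t c A B) atTop
      (𝓝 (0 + ∫ V in Set.Ioi A, (Rpt t V - Rpt t A) * ((2*c) * V ^ (-(2*c)-1)))) := by
  have hc0 : (0:ℝ) < c := by linarith
  have hGint := integrableOn_G htop hK hbound hc hA
  have hInt : Tendsto (fun B => ∫ V in A..B, (Rpt t V - Rpt t A) * ((2*c) * V ^ (-(2*c)-1)))
      atTop (𝓝 (∫ V in Set.Ioi A, (Rpt t V - Rpt t A) * ((2*c) * V ^ (-(2*c)-1)))) :=
    intervalIntegral_tendsto_integral_Ioi A hGint tendsto_id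
  have hcomb := (boundary_tendsto hK hbound (A := A) hc).add hInt
  apply Tendsto.congr' ?_ hcomb
  filter_upwards [eventually_ge_atTop A] with B hB
  rw [RInt_eq hpos hmono htop hc0 hA hB, intervalIntegral.integral_of_le hB]

/-- If `|R(V)| ≤ K V^(1/2) (log V)²` for `V ≥ 10` then `H(c) = ∫_0^∞ V^(-2c) dR(V)` converges
for all `c ∈ (1/4,1/2)`, and `∫_A^∞ V^(-2c) dR(V)` converges for all `A > 0` and `c > 1/4`. -/
theorem stmt_10 (t : ℕ → ℝ) (hpos : ∀ j, 0 < t j) (hmono : StrictMono t)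
    (htop : Tendsto t atTop atTop)
    (K : ℝ) (hK : 0 < K)
    (hbound : ∀ V : ℝ, 10 ≤ V → |Rpt t V| ≤ K * V ^ ((1:ℝ)/2) * Real.log V ^ 2) :
    (∀ c ∈ Set.Ioo (1/4:ℝ) (1/2), ∃ l : ℝ,
      Tendsto (fun A => 2 * (∑' j : ℕ, if t j ≤ A then t j ^ (-(2*c)) else 0)
          - A ^ (1 - 2*c) / (1 - 2*c))
        atTop (𝓝 l)) ∧
    (∀ A : ℝ, 0 < A → ∀ c : ℝ, 1/4 < c → ∃ l : ℝ,
      Tendsto (fun B => RInt t c A B) atTop (𝓝 l)) := by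
  constructor
  · rintro c ⟨hc1, hc2⟩
    have hl := key_tendsto hpos hmono htop hK hbound one_pos hc1
    set D : ℝ := 2 * (∑ j ∈ Finset.range (nuF t 1), t j ^ (-(2*c))) - 1/(1-2*c) with hD
    refine ⟨_, Tendsto.congr' ?_ (hl.add_const D)⟩
    have h1c : (0:ℝ) < 1 - 2*c := by linarith
    filter_upwards [eventually_ge_atTop (1:ℝ)] with B hB
    have hI : ∫ V in Set.Ioc 1 B, V ^ (-(2*c)) = (B ^ (1-2*c) - 1)/(1-2*c) := by
      rw [← intervalIntegral.integral_of_le hB,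
        integral_rpow (Or.inr ⟨by intro h; rw [neg_eq_iff_eq_neg] at h; nlinarith,
          Set.notMem_uIcc_of_lt one_pos (by linarith)⟩)]
      have he : -(2*c)+1 = 1-2*c := by ring
      rw [he, Real.one_rpow]
    have hsum : (∑' j : ℕ, if t j ≤ B then t j ^ (-(2*c)) else 0)
        = (∑ j ∈ Finset.range (nuF t 1), t j ^ (-(2*c)))
          + ∑ j ∈ Finset.Ico (nuF t 1) (nuF t B), t j ^ (-(2*c)) := by
      rw [tsum_le_eq hmono htop, Finset.range_eq_Ico,
        ← Finset.sum_Ico_consecutive _ (Nat.zero_le _) (nuF_mono htop hB),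
        ← Finset.range_eq_Ico]
    show RInt t c 1 B + D
        = 2 * (∑' j : ℕ, if t j ≤ B then t j ^ (-(2*c)) else 0) - B ^ (1 - 2*c) / (1 - 2*c)
    rw [RInt, tsum_cond_eq hmono htop _ 1 B, hI, hsum, hD]
    field_simp
    ring
  · intro A hA c hc
    exact ⟨_, key_tendsto hpos hmono htop hK hbound hA hc⟩
end

section
/- For every integer n ≥ 1 and every s ∈ ℂ with Re s < n/2, the function x ↦ G(s, π|x|²) is integrable on ℝⁿ and ∫_{ℝⁿ} G(s, π|x|²) dx = 1/(n/2 − s). -/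
open MeasureTheory ProbabilityTheory Filter Topology Set
open scoped Classical

/-- `G(s,x) = ∫_1^∞ t^(s-1) e^(-xt) dt` for complex `s` and real `x > 0`. -/
noncomputable def GC (s : ℂ) (x : ℝ) : ℂ :=
  ∫ t in Set.Ioi (1:ℝ), (t:ℂ) ^ (s - 1) * Complex.exp (-((x * t : ℝ) : ℂ))

section Aux

open Real

lemma nsq_eq_sum {n : ℕ} (x : Fin n → ℝ) : nsq x = ∑ i, x i ^ 2 := rfl

lemma gauss_prod_form (n : ℕ) (b : ℝ) (x : Fin n → ℝ) :
    Real.exp (-(b * nsq x)) = ∏ i, Real.exp (-b * x i ^ 2) := by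
  rw [← Real.exp_sum]
  congr 1
  rw [nsq_eq_sum, Finset.mul_sum, ← Finset.sum_neg_distrib]
  simp [neg_mul]

lemma gauss_integrable (n : ℕ) {b : ℝ} (hb : 0 < b) :
    Integrable (fun x : Fin n → ℝ => Real.exp (-(b * nsq x))) volume := by
  have : (fun x : Fin n → ℝ => Real.exp (-(b * nsq x)))
      = fun x => ∏ i, Real.exp (-b * x i ^ 2) := funext (gauss_prod_form n b)
  rw [this]
  exact Integrable.fintype_prod (fun _ => integrable_exp_neg_mul_sq hb)

lemma gauss_integral (n : ℕ) {b : ℝ} (hb : 0 < b) :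
    ∫ x : Fin n → ℝ, Real.exp (-(b * nsq x)) = (Real.sqrt (Real.pi / b)) ^ n := by
  simp_rw [gauss_prod_form n b]
  rw [MeasureTheory.volume_pi, MeasureTheory.integral_fintype_prod_eq_pow (fun y => Real.exp (-b * y ^ 2)),
    integral_gaussian]
  simp

lemma gauss_integral_t (n : ℕ) {t : ℝ} (ht : 1 < t) :
    ∫ x : Fin n → ℝ, Real.exp (-(Real.pi * t * nsq x)) = t ^ (-(n : ℝ)/2) := by
  have ht0 : 0 < t := lt_trans one_pos ht
  rw [gauss_integral n (by positivity)]
  have h1 : Real.pi / (Real.pi * t) = t⁻¹ := by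
    field_simp
  rw [h1, Real.sqrt_eq_rpow, ← Real.rpow_natCast (t⁻¹ ^ ((1:ℝ)/2)) n,
    ← Real.rpow_mul (by positivity), Real.inv_rpow ht0.le, ← Real.rpow_neg ht0.le]
  norm_num
  congr 1
  ring

end Aux

set_option maxHeartbeats 2000000 in
/-- For `Re s < n/2`, `x ↦ G(s, π|x|²)` is integrable on `ℝⁿ` with integral `1/(n/2 - s)`. -/
theorem stmt_14 (n : ℕ) (hn : 1 ≤ n) (s : ℂ) (hs : s.re < (n:ℝ)/2) :
    Integrable (fun x : Fin n → ℝ => GC s (Real.pi * nsq x)) volume ∧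
    ∫ x : Fin n → ℝ, GC s (Real.pi * nsq x) = 1/((n:ℂ)/2 - s) := by
  set σ := s.re with hσdef
  have hσ : σ - 1 - (n : ℝ)/2 < -1 := by linarith
  set F : (Fin n → ℝ) → ℝ → ℂ :=
    fun x t => (t : ℂ) ^ (s - 1) * Complex.exp (-((Real.pi * nsq x * t : ℝ) : ℂ)) with hF
  have hGC : ∀ x : Fin n → ℝ, GC s (Real.pi * nsq x) = ∫ t in Set.Ioi (1:ℝ), F x t := by
    intro x; rfl
  -- continuity of nsq
  have hnsq_cont : Continuous (fun x : Fin n → ℝ => nsq x) := by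
    simp only [nsq_eq_sum]
    exact continuous_finset_sum _ (fun i _ => (continuous_apply i).pow 2)
  -- a.e. strong measurability of uncurried F on the product
  have hmeas : AEStronglyMeasurable (Function.uncurry F)
      (volume.prod (volume.restrict (Set.Ioi (1:ℝ)))) := by
    have hrestr : (volume : Measure (Fin n → ℝ)).prod (volume.restrict (Set.Ioi (1:ℝ)))
        = ((volume : Measure (Fin n → ℝ)).prod volume).restrict
            (Set.univ ×ˢ Set.Ioi (1:ℝ)) := by
      rw [← Measure.prod_restrict, Measure.restrict_univ]
    rw [hrestr]
    apply ContinuousOn.aestronglyMeasurable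
    · intro p hp
      have hp2 : (1:ℝ) < p.2 := (Set.mem_prod.1 hp).2
      apply ContinuousWithinAt.mul
      · exact ((Complex.continuousAt_ofReal_cpow_const p.2 (s-1)
          (Or.inr (by positivity))).comp continuousAt_snd).continuousWithinAt
      · apply Continuous.continuousWithinAt
        exact Complex.continuous_exp.comp
          ((Complex.continuous_ofReal.comp
            (((continuous_const.mul (hnsq_cont.comp continuous_fst)).mul
              continuous_snd))).neg)
    · exact MeasurableSet.univ.prod measurableSet_Ioi
  -- norm of F
  have hnorm : ∀ x : Fin n → ℝ, ∀ t : ℝ, 1 < t →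
      ‖F x t‖ = t ^ (σ - 1) * Real.exp (-(Real.pi * t * nsq x)) := by
    intro x t ht
    have ht0 : 0 < t := lt_trans one_pos ht
    simp only [hF]
    simp only [norm_mul,
      Complex.norm_cpow_eq_rpow_re_of_pos ht0, Complex.sub_re, Complex.one_re]
    congr 1
    rw [← Complex.ofReal_neg, Complex.norm_exp]
    simp only [Complex.ofReal_re]
    ring_nf
  -- integrability of x-sections
  have hsec : ∀ t : ℝ, 1 < t → Integrable (fun x : Fin n → ℝ => F x t) volume := by
    intro t ht
    have ht0 : 0 < t := lt_trans one_pos ht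
    have h1 : Integrable (fun x : Fin n → ℝ => Real.exp (-(Real.pi * t * nsq x))) volume :=
      gauss_integrable n (by positivity)
    have h2 : (fun x : Fin n → ℝ => F x t)
        = fun x => (t : ℂ) ^ (s - 1) * ((Real.exp (-(Real.pi * t * nsq x)) : ℝ) : ℂ) := by
      funext x
      simp only [hF]
      congr 1
      rw [show Real.pi * nsq x * t = Real.pi * t * nsq x from by ring,
        ← Complex.ofReal_neg, Complex.ofReal_exp]
    rw [h2]
    exact (h1.ofReal.const_mul _)
  -- integral of the norm over x, for t > 1
  have hnormint : ∀ t : ℝ, 1 < t →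
      (∫ x : Fin n → ℝ, ‖F x t‖) = t ^ (σ - 1 - (n : ℝ)/2) := by
    intro t ht
    have ht0 : 0 < t := lt_trans one_pos ht
    have : (∫ x : Fin n → ℝ, ‖F x t‖)
        = ∫ x : Fin n → ℝ, t ^ (σ - 1) * Real.exp (-(Real.pi * t * nsq x)) := by
      congr 1; funext x; exact hnorm x t ht
    rw [this, integral_const_mul, gauss_integral_t n ht, ← Real.rpow_add ht0]
    congr 1; ring
  -- integrability of uncurried F on the product
  have hprod : Integrable (Function.uncurry F)
      (volume.prod (volume.restrict (Set.Ioi (1:ℝ)))) := by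
    rw [integrable_prod_iff' hmeas]
    constructor
    · filter_upwards [ae_restrict_mem measurableSet_Ioi] with t ht
      exact hsec t ht
    · have : IntegrableOn (fun t : ℝ => t ^ (σ - 1 - (n : ℝ)/2)) (Set.Ioi (1:ℝ)) :=
        integrableOn_Ioi_rpow_of_lt hσ one_pos
      apply this.congr_fun_ae
      filter_upwards [ae_restrict_mem measurableSet_Ioi] with t ht
      exact (hnormint t ht).symm
  -- the inner x-integral for fixed t > 1
  have hinner : ∀ t : ℝ, t ∈ Set.Ioi (1:ℝ) →
      (∫ x : Fin n → ℝ, F x t) = (t : ℂ) ^ (s - 1 - (n : ℂ)/2) := by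
    intro t ht
    rw [Set.mem_Ioi] at ht
    have ht0 : 0 < t := lt_trans one_pos ht
    have h2 : (∫ x : Fin n → ℝ, F x t)
        = (t : ℂ) ^ (s - 1) * ∫ x : Fin n → ℝ,
            ((Real.exp (-(Real.pi * t * nsq x)) : ℝ) : ℂ) := by
      rw [← integral_const_mul]
      congr 1; funext x
      simp only [hF]
      congr 1
      rw [show Real.pi * nsq x * t = Real.pi * t * nsq x from by ring,
        ← Complex.ofReal_neg, Complex.ofReal_exp]
    have h7 : (∫ x : Fin n → ℝ, ((Real.exp (-(Real.pi * t * nsq x)) : ℝ) : ℂ))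
        = ((t ^ (-(n:ℝ)/2) : ℝ) : ℂ) := by
      rw [← gauss_integral_t n ht]
      exact integral_ofReal
    rw [h2, h7, Complex.ofReal_cpow ht0.le]
    have h3 : ((-(n : ℝ)/2 : ℝ) : ℂ) = -(n : ℂ)/2 := by push_cast; ring
    rw [h3, ← Complex.cpow_add _ _ (by exact_mod_cast ht0.ne')]
    congr 1; ring
  constructor
  · have := hprod.integral_prod_left
    refine this.congr ?_
    filter_upwards with x
    exact (hGC x).symm
  · have hswap := integral_integral_swap hprod
    calc ∫ x : Fin n → ℝ, GC s (Real.pi * nsq x)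
        = ∫ x : Fin n → ℝ, ∫ t in Set.Ioi (1:ℝ), F x t := by
          simp only [hGC]
      _ = ∫ t in Set.Ioi (1:ℝ), ∫ x : Fin n → ℝ, F x t := hswap
      _ = ∫ t in Set.Ioi (1:ℝ), (t : ℂ) ^ (s - 1 - (n : ℂ)/2) :=
          setIntegral_congr_fun measurableSet_Ioi hinner
      _ = 1/((n:ℂ)/2 - s) := by
          have hre : (s - 1 - (n : ℂ)/2).re < -1 := by
            have : ((n : ℂ)/2).re = (n : ℝ)/2 := by
              have : ((n : ℂ)/2) = (((n : ℝ)/2 : ℝ) : ℂ) := by push_cast; ring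
              rw [this, Complex.ofReal_re]
            simp only [Complex.sub_re, Complex.one_re, this]
            linarith
          rw [integral_Ioi_cpow_of_lt hre one_pos]
          have h4 : (s - 1 - (n : ℂ)/2) + 1 = -((n:ℂ)/2 - s) := by ring
          rw [h4, Complex.ofReal_one, Complex.one_cpow]
          have h5 : ((n:ℂ)/2 - s) ≠ 0 := by
            intro h
            have := congrArg Complex.re h
            simp only [Complex.sub_re, Complex.zero_re] at this
            have h6 : ((n : ℂ)/2).re = (n : ℝ)/2 := by
              have : ((n : ℂ)/2) = (((n : ℝ)/2 : ℝ) : ℂ) := by push_cast; ring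
              rw [this, Complex.ofReal_re]
            rw [h6] at this
            linarith
          rw [neg_div_neg_eq]
end
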